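/- The inclusion of the previous lemma can be strict: in R = C[x,y,z] (or a polynomial ring over a field), with q_1 = (x², y²), q_2 = (x², xy², y³, z), I = q_1 ∩ q_2, and J = (x,y), the ideals q_1, q_2 are primary with distinct radicals (x,y) and (x,y,z), J ⊄ q_2, yet the only associated prime of R/(I : J) is (x,y). -/

import Mathlib

open MvPolynomial

section Aux

/-- membership in the ideal generated by all variables iff constant coefficient vanishes -/
lemma mem_spanX_iff' {σ R : Type*} [CommRing R] {f : MvPolynomial σ R} :
    f ∈ Ideal.span (X '' (Set.univ : Set σ) : Set (MvPolynomial σ R)) ↔ constantCoeff f = 0 := by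
  rw [mem_ideal_span_X_image, constantCoeff_eq]
  constructor
  · intro h
    by_contra hc
    obtain ⟨i, -, hi⟩ := h 0 (mem_support_iff.mpr hc)
    simp at hi
  · intro h m hm
    by_contra hc
    push_neg at hc
    have : m = 0 := Finsupp.ext fun i => by simpa using hc i
    exact mem_support_iff.mp hm (this ▸ h)

lemma spanX_eq_ker' {σ R : Type*} [CommRing R] :
    Ideal.span (X '' (Set.univ : Set σ) : Set (MvPolynomial σ R))
      = RingHom.ker (constantCoeff : MvPolynomial σ R →+* R) := by
  ext f; rw [mem_spanX_iff', RingHom.mem_ker]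

lemma comap_isPrimary' {R R' : Type*} [CommRing R] [CommRing R'] (f : R →+* R')
    {q : Ideal R'} (hq : q.IsPrimary) : (q.comap f).IsPrimary := by
  obtain ⟨hne, hp⟩ := Ideal.isPrimary_iff.mp hq
  rw [Ideal.isPrimary_iff]
  constructor
  · intro h
    apply hne
    rw [Ideal.eq_top_iff_one] at h ⊢
    simpa using h
  · intro x y hxy
    rcases hp (show f x * f y ∈ q by rw [← map_mul]; exact hxy) with h | h
    · exact Or.inl h
    · obtain ⟨n, hn⟩ := h
      exact Or.inr ⟨n, show f (y ^ n) ∈ q by rw [map_pow]; exact hn⟩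

lemma span_eq_comap' {R R' : Type*} [CommRing R] [CommRing R'] (e : R ≃+* R') (s : Set R) :
    Ideal.span s = Ideal.comap (e : R →+* R') (Ideal.span ((e : R →+* R') '' s)) := by
  rw [← Ideal.map_span, Ideal.comap_map_of_bijective (e : R →+* R') e.bijective]

variable {A : Type*} [CommRing A] [IsDomain A]

lemma monomial_core' {G : Set (Fin 2 →₀ ℕ)} {a b : MvPolynomial (Fin 2) A}
    (hb : constantCoeff b ≠ 0)
    (h : a * b ∈ Ideal.span ((fun s => monomial s (1 : A)) '' G)) :
    a ∈ Ideal.span ((fun s => monomial s (1 : A)) '' G) := by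
  rw [mem_ideal_span_monomial_image] at h ⊢
  have key : ∀ (n : ℕ) (m : Fin 2 →₀ ℕ), m 0 + m 1 = n →
      (∀ g ∈ G, ¬ g ≤ m) → coeff m a = 0 := by
    intro n
    induction n using Nat.strong_induction_on with
    | _ n ih =>
      intro m hm hg
      by_contra hc
      have hmem : m ∈ (a * b).support := by
        rw [mem_support_iff, coeff_mul, Finset.sum_eq_single ((m, 0) : (Fin 2 →₀ ℕ) × (Fin 2 →₀ ℕ))]
        · have : coeff 0 b ≠ 0 := by rw [constantCoeff_eq] at hb; exact hb
          exact mul_ne_zero hc this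
        · rintro ⟨u, v⟩ huv hne
          rw [Finset.HasAntidiagonal.mem_antidiagonal] at huv
          have hu : u ≤ m := huv ▸ le_add_right le_rfl
          have hune : u ≠ m := by
            rintro rfl
            exact hne (by simpa using (add_eq_left.mp huv))
          have h0 : u 0 ≤ m 0 := hu 0
          have h1 : u 1 ≤ m 1 := hu 1
          have hne2 : u 0 ≠ m 0 ∨ u 1 ≠ m 1 := by
            by_contra hcon
            push_neg at hcon
            exact hune (Finsupp.ext fun i => by fin_cases i <;> simp [hcon.1, hcon.2])
          have hlt : u 0 + u 1 < n := by omega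
          rw [ih _ hlt u rfl (fun g hgG hgu => hg g hgG (hgu.trans hu)), zero_mul]
        · intro hnm
          exact absurd (Finset.HasAntidiagonal.mem_antidiagonal.mpr (by simp)) hnm
      obtain ⟨g, hgG, hgm⟩ := h m hmem
      exact hg g hgG hgm
  intro m hm
  by_contra hne
  push_neg at hne
  exact mem_support_iff.mp hm (key _ m rfl fun g hg hle => hne g hg hle)

lemma monomial_primary' {G : Set (Fin 2 →₀ ℕ)} (h0 : ∀ g ∈ G, g ≠ 0)
    (hrad : Ideal.span (X '' (Set.univ : Set (Fin 2)) : Set (MvPolynomial (Fin 2) A))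
      ≤ (Ideal.span ((fun s => monomial s (1 : A)) '' G)).radical) :
    (Ideal.span ((fun s => monomial s (1 : A)) '' G)).IsPrimary := by
  rw [Ideal.isPrimary_iff]
  constructor
  · intro htop
    have h1 : (1 : MvPolynomial (Fin 2) A) ∈ Ideal.span ((fun s => monomial s (1 : A)) '' G) := by
      rw [htop]; trivial
    rw [mem_ideal_span_monomial_image] at h1
    have hsup : (0 : Fin 2 →₀ ℕ) ∈ (1 : MvPolynomial (Fin 2) A).support := by
      rw [mem_support_iff]; simp
    obtain ⟨g, hg, hle⟩ := h1 0 hsup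
    exact h0 g hg (Finsupp.ext fun i => Nat.le_zero.mp (hle i))
  · intro x y hxy
    by_cases hy : constantCoeff y = 0
    · exact Or.inr (hrad (mem_spanX_iff'.mpr hy))
    · exact Or.inl (monomial_core' hy hxy)

end Aux

noncomputable abbrev SS' := MvPolynomial (Fin 1) ℂ
noncomputable abbrev BB' := MvPolynomial (Fin 2) SS'
noncomputable abbrev RR' := MvPolynomial (Fin 3) ℂ

noncomputable def psiEquiv : RR' ≃ₐ[ℂ] BB' :=
  (renameEquiv ℂ finSumFinEquiv.symm).trans (sumAlgEquiv ℂ (Fin 2) (Fin 1))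

lemma sumRE0 (i : Fin 2) : (sumRingEquiv ℂ (Fin 2) (Fin 1)) (X (Sum.inl i)) = X i := by
  exact sumRingEquiv_X_inl (R := ℂ) (S₂ := Fin 1) (s := i)

lemma psi_X0 : psiEquiv (X 0) = X 0 := by
  simp [psiEquiv, sumAlgEquiv_X_inl, finSumFinEquiv,
    show (Fin.addCases Sum.inl Sum.inr (0 : Fin 3) : Fin 2 ⊕ Fin 1) = Sum.inl 0 from rfl, sumRE0]

lemma psi_X1 : psiEquiv (X 1) = X 1 := by
  simp [psiEquiv, sumAlgEquiv_X_inl, finSumFinEquiv,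
    show (Fin.addCases Sum.inl Sum.inr (1 : Fin 3) : Fin 2 ⊕ Fin 1) = Sum.inl 1 from rfl, sumRE0]

-- range of X over Fin 2
lemma rangeX2 : (X '' (Set.univ : Set (Fin 2)) : Set BB') = {X 0, X 1} := by
  rw [Set.image_univ]
  ext p
  constructor
  · rintro ⟨i, rfl⟩
    fin_cases i
    · exact Set.mem_insert _ _
    · exact Set.mem_insert_of_mem _ rfl
  · rintro (rfl | rfl)
    · exact ⟨0, rfl⟩
    · exact ⟨1, rfl⟩

lemma rangeX3 : (X '' (Set.univ : Set (Fin 3)) : Set RR') = {X 0, X 1, X 2} := by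
  rw [Set.image_univ]
  ext p
  constructor
  · rintro ⟨i, rfl⟩
    fin_cases i
    · exact Set.mem_insert _ _
    · exact Set.mem_insert_of_mem _ (Set.mem_insert _ _)
    · exact Set.mem_insert_of_mem _ (Set.mem_insert_of_mem _ rfl)
  · rintro (rfl | rfl | rfl)
    · exact ⟨0, rfl⟩
    · exact ⟨1, rfl⟩
    · exact ⟨2, rfl⟩

open Finsupp (single)

-- monomial forms
lemma q1_mon : (Ideal.span {X 0 ^ 2, X 1 ^ 2} : Ideal RR')
    = Ideal.span ((fun s => monomial s (1 : ℂ)) ''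
        {single 0 2, single 1 2} : Set RR') := by
  congr 1
  rw [Set.image_insert_eq, Set.image_singleton]
  simp [X_pow_eq_monomial]

lemma q2_mon : (Ideal.span {X 0 ^ 2, X 0 * X 1 ^ 2, X 1 ^ 3, X 2} : Ideal RR')
    = Ideal.span ((fun s => monomial s (1 : ℂ)) ''
        {single 0 2, single 0 1 + single 1 2, single 1 3, single 2 1} : Set RR') := by
  congr 1
  rw [Set.image_insert_eq, Set.image_insert_eq, Set.image_insert_eq, Set.image_singleton]
  have h1 : (X 0 * X 1 ^ 2 : RR') = monomial (single 0 1 + single 1 2) 1 := by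
    rw [show (X 0 : RR') = monomial (single 0 1) 1 by rw [← X_pow_eq_monomial, pow_one],
      X_pow_eq_monomial, monomial_mul, one_mul]
  have h2 : (X 2 : RR') = monomial (single 2 1) 1 := by
    rw [← X_pow_eq_monomial, pow_one]
  rw [h1, h2]
  simp [X_pow_eq_monomial]

lemma K_mon : (Ideal.span {X 0 ^ 2, X 0 * X 1, X 1 ^ 2} : Ideal RR')
    = Ideal.span ((fun s => monomial s (1 : ℂ)) ''
        {single 0 2, single 0 1 + single 1 1, single 1 2} : Set RR') := by
  congr 1
  rw [Set.image_insert_eq, Set.image_insert_eq, Set.image_singleton]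
  have h1 : (X 0 * X 1 : RR') = monomial (single 0 1 + single 1 1) 1 := by
    rw [show (X 0 : RR') = monomial (single 0 1) 1 by rw [← X_pow_eq_monomial, pow_one],
      show (X 1 : RR') = monomial (single 1 1) 1 by rw [← X_pow_eq_monomial, pow_one],
      monomial_mul, one_mul]
  rw [h1]
  simp [X_pow_eq_monomial]

lemma q1_mon' : (Ideal.span {X 0 ^ 2, X 1 ^ 2} : Ideal BB')
    = Ideal.span ((fun s => monomial s (1 : SS')) ''
        {single 0 2, single 1 2} : Set BB') := by
  congr 1
  rw [Set.image_insert_eq, Set.image_singleton]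
  simp [X_pow_eq_monomial]

lemma K_mon' : (Ideal.span {X 0 ^ 2, X 0 * X 1, X 1 ^ 2} : Ideal BB')
    = Ideal.span ((fun s => monomial s (1 : SS')) ''
        {single 0 2, single 0 1 + single 1 1, single 1 2} : Set BB') := by
  congr 1
  rw [Set.image_insert_eq, Set.image_insert_eq, Set.image_singleton]
  have h1 : (X 0 * X 1 : BB') = monomial (single 0 1 + single 1 1) 1 := by
    rw [show (X 0 : BB') = monomial (single 0 1) 1 by rw [← X_pow_eq_monomial, pow_one],
      show (X 1 : BB') = monomial (single 1 1) 1 by rw [← X_pow_eq_monomial, pow_one],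
      monomial_mul, one_mul]
  rw [h1]
  simp [X_pow_eq_monomial]

lemma coe_psi0 : (psiEquiv.toRingEquiv : RR' →+* BB') (X 0) = X 0 := psi_X0
lemma coe_psi1 : (psiEquiv.toRingEquiv : RR' →+* BB') (X 1) = X 1 := psi_X1

lemma P_prime : (Ideal.span {X 0, X 1} : Ideal RR').IsPrime := by
  have himg : (psiEquiv.toRingEquiv : RR' →+* BB') '' {X 0, X 1} = {X 0, X 1} := by
    rw [Set.image_insert_eq, Set.image_singleton, coe_psi0, coe_psi1]
  rw [span_eq_comap' psiEquiv.toRingEquiv, himg, show (Ideal.span {X 0, X 1} : Ideal BB')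
      = RingHom.ker (constantCoeff : BB' →+* SS') by rw [← rangeX2, spanX_eq_ker']]
  haveI := RingHom.ker_isPrime (constantCoeff : BB' →+* SS')
  exact Ideal.IsPrime.comap _

lemma M_max : (Ideal.span {X 0, X 1, X 2} : Ideal RR').IsMaximal := by
  rw [← rangeX3, spanX_eq_ker']
  exact RingHom.ker_isMaximal_of_surjective _ (fun r => ⟨C r, constantCoeff_C _ r⟩)

lemma mem_P0 : (X 0 : RR') ∈ Ideal.span ({X 0, X 1} : Set RR') :=
  Ideal.subset_span (Set.mem_insert _ _)
lemma mem_P1 : (X 1 : RR') ∈ Ideal.span ({X 0, X 1} : Set RR') :=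
  Ideal.subset_span (Set.mem_insert_of_mem _ rfl)
lemma mem_M0 : (X 0 : RR') ∈ Ideal.span ({X 0, X 1, X 2} : Set RR') :=
  Ideal.subset_span (Set.mem_insert _ _)
lemma mem_M1 : (X 1 : RR') ∈ Ideal.span ({X 0, X 1, X 2} : Set RR') :=
  Ideal.subset_span (Set.mem_insert_of_mem _ (Set.mem_insert _ _))
lemma mem_M2 : (X 2 : RR') ∈ Ideal.span ({X 0, X 1, X 2} : Set RR') :=
  Ideal.subset_span (Set.mem_insert_of_mem _ (Set.mem_insert_of_mem _ rfl))

lemma mem_q1_a : (X 0 ^ 2 : RR') ∈ Ideal.span ({X 0 ^ 2, X 1 ^ 2} : Set RR') :=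
  Ideal.subset_span (Set.mem_insert _ _)
lemma mem_q1_b : (X 1 ^ 2 : RR') ∈ Ideal.span ({X 0 ^ 2, X 1 ^ 2} : Set RR') :=
  Ideal.subset_span (Set.mem_insert_of_mem _ rfl)
lemma mem_q2_a : (X 0 ^ 2 : RR') ∈ Ideal.span ({X 0 ^ 2, X 0 * X 1 ^ 2, X 1 ^ 3, X 2} : Set RR') :=
  Ideal.subset_span (Set.mem_insert _ _)
lemma mem_q2_b : (X 0 * X 1 ^ 2 : RR') ∈
    Ideal.span ({X 0 ^ 2, X 0 * X 1 ^ 2, X 1 ^ 3, X 2} : Set RR') :=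
  Ideal.subset_span (Set.mem_insert_of_mem _ (Set.mem_insert _ _))
lemma mem_q2_c : (X 1 ^ 3 : RR') ∈ Ideal.span ({X 0 ^ 2, X 0 * X 1 ^ 2, X 1 ^ 3, X 2} : Set RR') :=
  Ideal.subset_span (Set.mem_insert_of_mem _ (Set.mem_insert_of_mem _ (Set.mem_insert _ _)))
lemma mem_q2_d : (X 2 : RR') ∈ Ideal.span ({X 0 ^ 2, X 0 * X 1 ^ 2, X 1 ^ 3, X 2} : Set RR') :=
  Ideal.subset_span
    (Set.mem_insert_of_mem _ (Set.mem_insert_of_mem _ (Set.mem_insert_of_mem _ rfl)))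
lemma mem_K_a : (X 0 ^ 2 : RR') ∈ Ideal.span ({X 0 ^ 2, X 0 * X 1, X 1 ^ 2} : Set RR') :=
  Ideal.subset_span (Set.mem_insert _ _)
lemma mem_K_b : (X 0 * X 1 : RR') ∈ Ideal.span ({X 0 ^ 2, X 0 * X 1, X 1 ^ 2} : Set RR') :=
  Ideal.subset_span (Set.mem_insert_of_mem _ (Set.mem_insert _ _))
lemma mem_K_c : (X 1 ^ 2 : RR') ∈ Ideal.span ({X 0 ^ 2, X 0 * X 1, X 1 ^ 2} : Set RR') :=
  Ideal.subset_span (Set.mem_insert_of_mem _ (Set.mem_insert_of_mem _ rfl))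

lemma rad_q1 : (Ideal.span {X 0 ^ 2, X 1 ^ 2} : Ideal RR').radical = Ideal.span {X 0, X 1} := by
  apply le_antisymm
  · have hle : (Ideal.span {X 0 ^ 2, X 1 ^ 2} : Ideal RR') ≤ Ideal.span {X 0, X 1} := by
      rw [Ideal.span_le]
      rintro p (rfl | rfl)
      · exact Ideal.pow_mem_of_mem _ mem_P0 2 two_pos
      · exact Ideal.pow_mem_of_mem _ mem_P1 2 two_pos
    calc (Ideal.span {X 0 ^ 2, X 1 ^ 2} : Ideal RR').radical
        ≤ (Ideal.span {X 0, X 1} : Ideal RR').radical := Ideal.radical_mono hle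
      _ = Ideal.span {X 0, X 1} := P_prime.radical
  · rw [Ideal.span_le]
    rintro p (rfl | rfl)
    · exact ⟨2, mem_q1_a⟩
    · exact ⟨2, mem_q1_b⟩

lemma rad_q2 : (Ideal.span {X 0 ^ 2, X 0 * X 1 ^ 2, X 1 ^ 3, X 2} : Ideal RR').radical
    = Ideal.span {X 0, X 1, X 2} := by
  apply le_antisymm
  · have hle : (Ideal.span {X 0 ^ 2, X 0 * X 1 ^ 2, X 1 ^ 3, X 2} : Ideal RR')
        ≤ Ideal.span {X 0, X 1, X 2} := by
      rw [Ideal.span_le]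
      rintro p (rfl | rfl | rfl | rfl)
      · exact Ideal.pow_mem_of_mem _ mem_M0 2 two_pos
      · exact Ideal.mul_mem_right _ _ mem_M0
      · exact Ideal.pow_mem_of_mem _ mem_M1 3 three_pos
      · exact mem_M2
    calc (Ideal.span {X 0 ^ 2, X 0 * X 1 ^ 2, X 1 ^ 3, X 2} : Ideal RR').radical
        ≤ (Ideal.span {X 0, X 1, X 2} : Ideal RR').radical := Ideal.radical_mono hle
      _ = Ideal.span {X 0, X 1, X 2} := M_max.isPrime.radical
  · rw [Ideal.span_le]
    have h2 : (X 2 ^ 1 : RR') ∈ Ideal.span ({X 0 ^ 2, X 0 * X 1 ^ 2, X 1 ^ 3, X 2} : Set RR') := by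
      rw [pow_one]; exact mem_q2_d
    rintro p (rfl | rfl | rfl)
    · exact ⟨2, mem_q2_a⟩
    · exact ⟨3, mem_q2_c⟩
    · exact ⟨1, h2⟩

lemma q2_primary : (Ideal.span {X 0 ^ 2, X 0 * X 1 ^ 2, X 1 ^ 3, X 2} : Ideal RR').IsPrimary :=
  Ideal.isPrimary_of_isMaximal_radical (rad_q2 ▸ M_max)

lemma q1B_primary : (Ideal.span {X 0 ^ 2, X 1 ^ 2} : Ideal BB').IsPrimary := by
  rw [q1_mon']
  apply monomial_primary'
  · rintro g (rfl | rfl)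
    · exact fun h => two_ne_zero (Finsupp.single_eq_zero.mp h)
    · exact fun h => two_ne_zero (Finsupp.single_eq_zero.mp h)
  · have ha : (X 0 ^ 2 : BB') ∈ Ideal.span ((fun s => monomial s (1 : SS')) ''
        {Finsupp.single 0 2, Finsupp.single 1 2} : Set BB') :=
      Ideal.subset_span ⟨Finsupp.single 0 2, Set.mem_insert _ _, X_pow_eq_monomial.symm⟩
    have hb : (X 1 ^ 2 : BB') ∈ Ideal.span ((fun s => monomial s (1 : SS')) ''
        {Finsupp.single 0 2, Finsupp.single 1 2} : Set BB') :=
      Ideal.subset_span ⟨Finsupp.single 1 2, Set.mem_insert_of_mem _ rfl, X_pow_eq_monomial.symm⟩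
    rw [rangeX2, Ideal.span_le]
    rintro p (rfl | rfl)
    · exact ⟨2, ha⟩
    · exact ⟨2, hb⟩

lemma q1_primary : (Ideal.span {X 0 ^ 2, X 1 ^ 2} : Ideal RR').IsPrimary := by
  have himg : (psiEquiv.toRingEquiv : RR' →+* BB') '' {X 0 ^ 2, X 1 ^ 2} = {X 0 ^ 2, X 1 ^ 2} := by
    rw [Set.image_insert_eq, Set.image_singleton, map_pow, map_pow, coe_psi0, coe_psi1]
  rw [span_eq_comap' psiEquiv.toRingEquiv, himg]
  exact comap_isPrimary' _ q1B_primary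

lemma KB_primary : (Ideal.span {X 0 ^ 2, X 0 * X 1, X 1 ^ 2} : Ideal BB').IsPrimary := by
  rw [K_mon']
  apply monomial_primary'
  · rintro g (rfl | rfl | rfl)
    · exact fun h => two_ne_zero (Finsupp.single_eq_zero.mp h)
    · intro h
      have := congrArg (fun f => f (0 : Fin 2)) h
      simp at this
    · exact fun h => two_ne_zero (Finsupp.single_eq_zero.mp h)
  · have ha : (X 0 ^ 2 : BB') ∈ Ideal.span ((fun s => monomial s (1 : SS')) ''
        {Finsupp.single 0 2, Finsupp.single 0 1 + Finsupp.single 1 1,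
          Finsupp.single 1 2} : Set BB') :=
      Ideal.subset_span ⟨Finsupp.single 0 2, Set.mem_insert _ _, X_pow_eq_monomial.symm⟩
    have hb : (X 1 ^ 2 : BB') ∈ Ideal.span ((fun s => monomial s (1 : SS')) ''
        {Finsupp.single 0 2, Finsupp.single 0 1 + Finsupp.single 1 1,
          Finsupp.single 1 2} : Set BB') :=
      Ideal.subset_span ⟨Finsupp.single 1 2,
        Set.mem_insert_of_mem _ (Set.mem_insert_of_mem _ rfl), X_pow_eq_monomial.symm⟩
    rw [rangeX2, Ideal.span_le]
    rintro p (rfl | rfl)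
    · exact ⟨2, ha⟩
    · exact ⟨2, hb⟩

lemma K_primary : (Ideal.span {X 0 ^ 2, X 0 * X 1, X 1 ^ 2} : Ideal RR').IsPrimary := by
  have himg : (psiEquiv.toRingEquiv : RR' →+* BB') '' {X 0 ^ 2, X 0 * X 1, X 1 ^ 2}
      = {X 0 ^ 2, X 0 * X 1, X 1 ^ 2} := by
    rw [Set.image_insert_eq, Set.image_insert_eq, Set.image_singleton, map_pow, map_pow,
      map_mul, coe_psi0, coe_psi1]
  rw [span_eq_comap' psiEquiv.toRingEquiv, himg]
  exact comap_isPrimary' _ KB_primary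

lemma rad_K : (Ideal.span {X 0 ^ 2, X 0 * X 1, X 1 ^ 2} : Ideal RR').radical
    = Ideal.span {X 0, X 1} := by
  apply le_antisymm
  · have hle : (Ideal.span {X 0 ^ 2, X 0 * X 1, X 1 ^ 2} : Ideal RR')
        ≤ Ideal.span {X 0, X 1} := by
      rw [Ideal.span_le]
      rintro p (rfl | rfl | rfl)
      · exact Ideal.pow_mem_of_mem _ mem_P0 2 two_pos
      · exact Ideal.mul_mem_right _ _ mem_P0
      · exact Ideal.pow_mem_of_mem _ mem_P1 2 two_pos
    calc (Ideal.span {X 0 ^ 2, X 0 * X 1, X 1 ^ 2} : Ideal RR').radical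
        ≤ (Ideal.span {X 0, X 1} : Ideal RR').radical := Ideal.radical_mono hle
      _ = Ideal.span {X 0, X 1} := P_prime.radical
  · rw [Ideal.span_le]
    rintro p (rfl | rfl)
    · exact ⟨2, mem_K_a⟩
    · exact ⟨2, mem_K_c⟩

lemma X2_not_mem_P : (X 2 : RR') ∉ Ideal.span ({X 0, X 1} : Set RR') := by
  intro h
  have himg : ({X 0, X 1} : Set RR') = X '' ({0, 1} : Set (Fin 3)) := by
    rw [Set.image_insert_eq, Set.image_singleton]
  rw [himg, mem_ideal_span_X_image] at h
  obtain ⟨i, hi, hne⟩ := h (Finsupp.single 2 1)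
    (by rw [support_X]; exact Finset.mem_singleton_self _)
  rcases hi with rfl | rfl <;> simp [Finsupp.single_apply] at hne

lemma X1_not_mem_q2 : (X 1 : RR') ∉
    Ideal.span ({X 0 ^ 2, X 0 * X 1 ^ 2, X 1 ^ 3, X 2} : Set RR') := by
  intro h
  rw [q2_mon, mem_ideal_span_monomial_image] at h
  obtain ⟨g, hg, hle⟩ := h (Finsupp.single 1 1)
    (by rw [support_X]; exact Finset.mem_singleton_self _)
  rcases hg with rfl | rfl | rfl | rfl
  · have := hle 0; simp [Finsupp.single_apply] at this
  · have := hle 1; simp [Finsupp.add_apply, Finsupp.single_apply] at this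
  · have := hle 1; simp [Finsupp.single_apply] at this
  · have := hle 2; simp [Finsupp.single_apply] at this

lemma colon_eq :
    ((Ideal.span {X 0 ^ 2, X 1 ^ 2} ⊓
        Ideal.span {X 0 ^ 2, X 0 * X 1 ^ 2, X 1 ^ 3, X 2} : Ideal RR')).colon
        (Ideal.span {X 0, X 1} : Ideal RR')
      = Ideal.span {X 0 ^ 2, X 0 * X 1, X 1 ^ 2} := by
  apply le_antisymm
  · intro f hf
    have h0 : f * X 0 ∈ (Ideal.span {X 0 ^ 2, X 1 ^ 2} : Ideal RR') := by
      have := Submodule.mem_colon.mp hf (X 0) mem_P0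
      rw [smul_eq_mul] at this
      exact this.1
    have h1 : f * X 1 ∈ (Ideal.span {X 0 ^ 2, X 1 ^ 2} : Ideal RR') := by
      have := Submodule.mem_colon.mp hf (X 1) mem_P1
      rw [smul_eq_mul] at this
      exact this.1
    rw [q1_mon, mem_ideal_span_monomial_image] at h0 h1
    rw [K_mon, mem_ideal_span_monomial_image]
    intro m hm
    have hm0 : (m + Finsupp.single 0 1) ∈ (f * X 0).support := by
      rw [mem_support_iff, coeff_mul_X]; exact mem_support_iff.mp hm
    have hm1 : (m + Finsupp.single 1 1) ∈ (f * X 1).support := by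
      rw [mem_support_iff, coeff_mul_X]; exact mem_support_iff.mp hm
    obtain ⟨g0, hg0, hle0⟩ := h0 _ hm0
    obtain ⟨g1, hg1, hle1⟩ := h1 _ hm1
    have A : 1 ≤ m 0 ∨ 2 ≤ m 1 := by
      rcases hg0 with rfl | rfl
      · left
        have := hle0 0
        simp [Finsupp.add_apply, Finsupp.single_apply] at this
        omega
      · right
        have := hle0 1
        simpa [Finsupp.add_apply, Finsupp.single_apply] using this
    have B : 2 ≤ m 0 ∨ 1 ≤ m 1 := by
      rcases hg1 with rfl | rfl
      · left
        have := hle1 0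
        simpa [Finsupp.add_apply, Finsupp.single_apply] using this
      · right
        have := hle1 1
        simp [Finsupp.add_apply, Finsupp.single_apply] at this
        omega
    rcases A with hA | hA
    · rcases B with hB | hB
      · exact ⟨Finsupp.single 0 2, Set.mem_insert _ _, Finsupp.single_le_iff.mpr hB⟩
      · refine ⟨Finsupp.single 0 1 + Finsupp.single 1 1,
          Set.mem_insert_of_mem _ (Set.mem_insert _ _), Finsupp.le_def.mpr fun i => ?_⟩
        fin_cases i <;> simp [Finsupp.add_apply, Finsupp.single_apply] <;> omega
    · exact ⟨Finsupp.single 1 2, Set.mem_insert_of_mem _ (Set.mem_insert_of_mem _ rfl),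
        Finsupp.single_le_iff.mpr hA⟩
  · have hcol : ∀ g : RR',
        g * X 0 ∈ (Ideal.span {X 0 ^ 2, X 1 ^ 2} ⊓
          Ideal.span {X 0 ^ 2, X 0 * X 1 ^ 2, X 1 ^ 3, X 2} : Ideal RR') →
        g * X 1 ∈ (Ideal.span {X 0 ^ 2, X 1 ^ 2} ⊓
          Ideal.span {X 0 ^ 2, X 0 * X 1 ^ 2, X 1 ^ 3, X 2} : Ideal RR') →
        g ∈ ((Ideal.span {X 0 ^ 2, X 1 ^ 2} ⊓
          Ideal.span {X 0 ^ 2, X 0 * X 1 ^ 2, X 1 ^ 3, X 2} : Ideal RR')).colon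
            (Ideal.span {X 0, X 1} : Ideal RR') := by
      intro g hg0 hg1
      rw [Submodule.mem_colon]
      intro p hp
      induction hp using Submodule.span_induction with
      | mem x hx =>
        rcases hx with rfl | rfl
        · rw [smul_eq_mul, mul_comm]; rw [mul_comm] at hg0; exact hg0
        · rw [smul_eq_mul, mul_comm]; rw [mul_comm] at hg1; exact hg1
      | zero => rw [smul_zero]; exact zero_mem _
      | add x y hx hy ihx ihy => rw [smul_add]; exact add_mem ihx ihy
      | smul a x hx ih => rw [smul_comm]; exact Submodule.smul_mem _ _ ih
    rw [Ideal.span_le]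
    rintro p (rfl | rfl | rfl)
    · refine hcol _ ⟨Ideal.mul_mem_right _ _ mem_q1_a, Ideal.mul_mem_right _ _ mem_q2_a⟩
        ⟨Ideal.mul_mem_right _ _ mem_q1_a, Ideal.mul_mem_right _ _ mem_q2_a⟩
    · refine hcol _ ⟨?_, ?_⟩ ⟨?_, ?_⟩
      · rw [show (X 0 * X 1 : RR') * X 0 = X 0 ^ 2 * X 1 by ring]
        exact Ideal.mul_mem_right _ _ mem_q1_a
      · rw [show (X 0 * X 1 : RR') * X 0 = X 0 ^ 2 * X 1 by ring]
        exact Ideal.mul_mem_right _ _ mem_q2_a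
      · rw [show (X 0 * X 1 : RR') * X 1 = X 1 ^ 2 * X 0 by ring]
        exact Ideal.mul_mem_right _ _ mem_q1_b
      · rw [show (X 0 * X 1 : RR') * X 1 = X 0 * X 1 ^ 2 by ring]
        exact mem_q2_b
    · refine hcol _ ⟨?_, ?_⟩ ⟨?_, ?_⟩
      · exact Ideal.mul_mem_right _ _ mem_q1_b
      · rw [show (X 1 ^ 2 : RR') * X 0 = X 0 * X 1 ^ 2 by ring]
        exact mem_q2_b
      · exact Ideal.mul_mem_right _ _ mem_q1_b
      · rw [show (X 1 ^ 2 : RR') * X 1 = X 1 ^ 3 by ring]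
        exact mem_q2_c

/-- In `R = ℂ[x,y,z]`, with `q₁ = (x², y²)`, `q₂ = (x², xy², y³, z)`, `I = q₁ ∩ q₂`
and `J = (x,y)`: the ideals `q₁`, `q₂` are primary with distinct radicals `(x,y)` and
`(x,y,z)`, `J ⊄ q₂`, yet the only associated prime of `R/(I : J)` is `(x,y)`.
(So the inclusion of the previous lemma can be strict.) -/
theorem associatedPrimes_colon_strict_example :
    ∀ (q₁ q₂ I J : Ideal (MvPolynomial (Fin 3) ℂ)),
    q₁ = Ideal.span {X 0 ^ 2, X 1 ^ 2} →
    q₂ = Ideal.span {X 0 ^ 2, X 0 * X 1 ^ 2, X 1 ^ 3, X 2} →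
    I = q₁ ⊓ q₂ →
    J = Ideal.span {X 0, X 1} →
    q₁.IsPrimary ∧ q₂.IsPrimary ∧
    q₁.radical = Ideal.span {X 0, X 1} ∧
    q₂.radical = Ideal.span {X 0, X 1, X 2} ∧
    q₁.radical ≠ q₂.radical ∧
    ¬ J ≤ q₂ ∧
    associatedPrimes (MvPolynomial (Fin 3) ℂ) ((MvPolynomial (Fin 3) ℂ) ⧸ (I.colon J))
      = {Ideal.span {X 0, X 1}} := by
  intro q₁ q₂ I J h1 h2 h3 h4
  subst h1 h2 h3 h4
  refine ⟨q1_primary, q2_primary, rad_q1, rad_q2, ?_, ?_, ?_⟩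
  · rw [rad_q1, rad_q2]
    intro h
    exact X2_not_mem_P (h ▸ mem_M2)
  · intro h
    exact X1_not_mem_q2 (h mem_P1)
  · rw [colon_eq, associatedPrimes.eq_singleton_of_isPrimary K_primary, rad_K]
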